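/- If a vertex v belongs to a k-power dominating set D of a hypergraph H and the white degree of v with respect to N[D\{v}] is at most k, then for any neighbor u of v, the set (D\{v}) ∪ {u} is also a k-power dominating set of H. -/

import Mathlib

/-- A hypergraph on vertex type `V`, given by its finite set of (finite) edges. -/
structure Hypergraph' (V : Type*) where
  edges : Finset (Finset V)

namespace Hypergraph'

variable {V : Type*}

/-- Two vertices are adjacent iff they are distinct and share an edge. -/
def Adj (H : Hypergraph' V) (u v : V) : Prop :=
  u ≠ v ∧ ∃ e ∈ H.edges, u ∈ e ∧ v ∈ e

/-- The underlying adjacency (simple) graph of a hypergraph. -/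
def graph (H : Hypergraph' V) : SimpleGraph V where
  Adj := H.Adj
  symm := by
    constructor
    rintro u v ⟨hne, e, he, hu, hv⟩
    exact ⟨hne.symm, e, he, hv, hu⟩
  loopless := by
    constructor
    rintro u ⟨hne, -⟩
    exact hne rfl

/-- Closed neighborhood of a set of vertices. -/
def closedNbhd (H : Hypergraph' V) (S : Set V) : Set V :=
  S ∪ {u | ∃ v ∈ S, H.Adj v u}

/-- `F` is a set of edges through `v` covering all neighbors of `v` outside `S`. -/
def Covers (H : Hypergraph' V) (v : V) (S : Set V) (F : Finset (Finset V)) : Prop :=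
  F ⊆ H.edges ∧ (∀ e ∈ F, v ∈ e) ∧ ∀ u, H.Adj v u → u ∉ S → ∃ e ∈ F, u ∈ e

/-- The white degree of `v` with respect to the blue set `S`: the minimum number of
edges containing `v` that cover all neighbors of `v` outside `S`. -/
noncomputable def wdeg (H : Hypergraph' V) (v : V) (S : Set V) : ℕ :=
  sInf {t | ∃ F, H.Covers v S F ∧ F.card ≤ t}

/-- One step of the `k`-forcing propagation: every blue vertex whose white
neighbors can be covered by at most `k` incident edges forces its neighbors blue. -/
def step (H : Hypergraph' V) (k : ℕ) (S : Set V) : Set V :=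
  S ∪ {u | ∃ v ∈ S, H.Adj v u ∧ H.wdeg v S ≤ k}

/-- `D` is a `k`-power dominating set if iterating the propagation from `N[D]`
colors every vertex blue. -/
def IsPDS (H : Hypergraph' V) (k : ℕ) (D : Set V) : Prop :=
  ∃ t : ℕ, (H.step k)^[t] (H.closedNbhd D) = Set.univ

/-- The `k`-power domination number. -/
noncomputable def pdn (H : Hypergraph' V) (k : ℕ) : ℕ :=
  sInf {t | ∃ D : Finset V, H.IsPDS k ↑D ∧ D.card ≤ t}

/-- A dominating set. -/
def Dominating (H : Hypergraph' V) (S : Set V) : Prop :=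
  H.closedNbhd S = Set.univ

/-- The domination number. -/
noncomputable def gamma (H : Hypergraph' V) : ℕ :=
  sInf {t | ∃ D : Finset V, H.Dominating ↑D ∧ D.card ≤ t}

/-- An `r`-uniform hypergraph. -/
def Uniform (H : Hypergraph' V) (r : ℕ) : Prop :=
  ∀ e ∈ H.edges, e.card = r

/-- Connectivity of the underlying adjacency graph. -/
def Connected (H : Hypergraph' V) : Prop := H.graph.Connected

/-- No isolated vertices: every vertex lies in some edge. -/
def NoIsolated (H : Hypergraph' V) : Prop :=
  ∀ v : V, ∃ e ∈ H.edges, v ∈ e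

/-- External private neighbors of `v` with respect to `D`. -/
def epn (H : Hypergraph' V) (v : V) (D : Set V) : Set V :=
  {u | u ∉ D ∧ H.Adj v u ∧ ∀ w ∈ D, w ≠ v → ¬ H.Adj w u}

/-- Number of connected components of the subhypergraph induced on `D`
(with respect to adjacency within `D`). -/
noncomputable def numComponents (H : Hypergraph' V) (D : Set V) : ℕ :=
  Nat.card (SimpleGraph.ConnectedComponent (SimpleGraph.induce D H.graph))

end Hypergraph'

namespace Hypergraph'

variable {V : Type*}

lemma closedNbhd_mono (H : Hypergraph' V) {S S' : Set V} (h : S ⊆ S') :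
    H.closedNbhd S ⊆ H.closedNbhd S' := by
  rintro x (hx | ⟨w, hw, hadj⟩)
  · exact Or.inl (h hx)
  · exact Or.inr ⟨w, h hw, hadj⟩

lemma covers_mono (H : Hypergraph' V) (v : V) {S S' : Set V} (h : S ⊆ S')
    {F : Finset (Finset V)} (hF : H.Covers v S F) : H.Covers v S' F :=
  ⟨hF.1, hF.2.1, fun u hadj hu => hF.2.2 u hadj (fun hm => hu (h hm))⟩

open Classical in
lemma wdeg_anti (H : Hypergraph' V) (v : V) {S S' : Set V} (h : S ⊆ S') :
    H.wdeg v S' ≤ H.wdeg v S := by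
  apply csInf_le_csInf (OrderBot.bddBelow _)
  · refine ⟨(H.edges.filter (fun e => v ∈ e)).card,
      H.edges.filter (fun e => v ∈ e), ⟨Finset.filter_subset _ _,
      fun e he => (Finset.mem_filter.mp he).2, ?_⟩, le_refl _⟩
    rintro u ⟨hne, e, he, hv, hu⟩ _
    exact ⟨e, Finset.mem_filter.mpr ⟨he, hv⟩, hu⟩
  · rintro t ⟨F, hF, hc⟩
    exact ⟨F, covers_mono H v h hF, hc⟩

lemma step_mono (H : Hypergraph' V) (k : ℕ) {S S' : Set V} (h : S ⊆ S') :
    H.step k S ⊆ H.step k S' := by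
  rintro x (hx | ⟨w, hw, hadj, hwd⟩)
  · exact Or.inl (h hx)
  · exact Or.inr ⟨w, h hw, hadj, le_trans (wdeg_anti H w h) hwd⟩

lemma step_iterate_mono (H : Hypergraph' V) (k : ℕ) (t : ℕ) {S S' : Set V} (h : S ⊆ S') :
    (H.step k)^[t] S ⊆ (H.step k)^[t] S' := by
  induction t generalizing S S' with
  | zero => exact h
  | succ n ih => rw [Function.iterate_succ_apply, Function.iterate_succ_apply]
                 exact ih (step_mono H k h)

end Hypergraph'

open Hypergraph' in
/-- If `v` belongs to a `k`-power dominating set `D` and the white degree of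
`v` with respect to `N[D \ {v}]` is at most `k`, then for any neighbor `u` of `v`,
`(D \ {v}) ∪ {u}` is also a `k`-power dominating set. -/
theorem swap_vertex_kPDS {V : Type*} (H : Hypergraph' V) (k : ℕ) (D : Set V) (v u : V)
    (hD : H.IsPDS k D) (hv : v ∈ D)
    (hw : H.wdeg v (H.closedNbhd (D \ {v})) ≤ k)
    (hu : H.Adj v u) :
    H.IsPDS k ((D \ {v}) ∪ {u}) := by
  obtain ⟨t, ht⟩ := hD
  refine ⟨t + 1, ?_⟩
  have key : H.closedNbhd D ⊆ H.step k (H.closedNbhd ((D \ {v}) ∪ {u})) := by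
    set S := H.closedNbhd ((D \ {v}) ∪ {u}) with hS
    have hsub : H.closedNbhd (D \ {v}) ⊆ S :=
      closedNbhd_mono H Set.subset_union_left
    have hvS : v ∈ S := Or.inr ⟨u, Or.inr rfl, H.graph.adj_symm hu⟩
    have hwS : H.wdeg v S ≤ k := le_trans (wdeg_anti H v hsub) hw
    intro x hx
    rcases hx with hx | ⟨w, hwD, hadj⟩
    · rcases eq_or_ne x v with rfl | hne
      · exact Or.inl hvS
      · exact Or.inl (hsub (Or.inl ⟨hx, hne⟩))
    · rcases eq_or_ne w v with rfl | hne
      · exact Or.inr ⟨w, hvS, hadj, hwS⟩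
      · exact Or.inl (hsub (Or.inr ⟨w, ⟨hwD, hne⟩, hadj⟩))
  have := step_iterate_mono H k t key
  rw [ht] at this
  rw [Function.iterate_succ_apply]
  exact Set.eq_univ_of_univ_subset this
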